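/- arXiv:1704.01361 — 2 statements merged into one kernel-verified Lean document; each statement's English description precedes it below -/
import Mathlib

section
/- Let S and T be operators with 0 ≤ S ≤ I and T ≥ 0, and let c > 0. Then I − (S+T)^{-1/2} S (S+T)^{-1/2} ≤ (1+c)(I − S) + (2 + c + c^{-1}) T, where (S+T)^{-1/2} denotes the square root of the generalized (Moore–Penrose) inverse of S + T. -/
open Matrix BigOperators Kronecker
open scoped Classical ComplexOrder

variable {d : Type*} [Fintype d] [DecidableEq d]

/-- Trace norm of a matrix. -/
noncomputable def traceNorm (A : Matrix d d ℂ) : ℝ :=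
  (((Matrix.posSemidef_conjTranspose_mul_self A).1.eigenvectorUnitary : Matrix d d ℂ) *
      Matrix.diagonal (fun i => ((Real.sqrt
        ((Matrix.posSemidef_conjTranspose_mul_self A).1.eigenvalues i) : ℝ) : ℂ)) *
      star ((Matrix.posSemidef_conjTranspose_mul_self A).1.eigenvectorUnitary :
        Matrix d d ℂ)).trace.re

/-- Spectral functional calculus for a Hermitian matrix. -/
noncomputable def specFun {A : Matrix d d ℂ} (hA : A.IsHermitian) (f : ℝ → ℝ) :
    Matrix d d ℂ :=
  (hA.eigenvectorUnitary : Matrix d d ℂ) *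
    Matrix.diagonal (fun i => (f (hA.eigenvalues i) : ℂ)) *
    star (hA.eigenvectorUnitary : Matrix d d ℂ)

/-- Matrix power via functional calculus, with the convention `0 ^ s = 0` on kernels.
For `s = -1/2` this gives the square root of the Moore–Penrose inverse. -/
noncomputable def mpow (A : Matrix d d ℂ) (s : ℝ) : Matrix d d ℂ :=
  if hA : A.PosSemidef then
    specFun hA.1 (fun t => if t = 0 then 0 else t ^ s)
  else 0

/-- Base-2 matrix logarithm via functional calculus, `log 0 := 0` on kernels. -/
noncomputable def mlog (A : Matrix d d ℂ) : Matrix d d ℂ :=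
  if hA : A.PosSemidef then
    specFun hA.1 (fun t => if t = 0 then 0 else Real.logb 2 t)
  else 0

/-- Positive spectral projection `{X ≥ 0}` of a Hermitian matrix. -/
noncomputable def posProj {A : Matrix d d ℂ} (hA : A.IsHermitian) : Matrix d d ℂ :=
  specFun hA (fun t => if 0 ≤ t then 1 else 0)

/-- A density operator: positive semi-definite with unit trace. -/
def IsDensity (ρ : Matrix d d ℂ) : Prop := ρ.PosSemidef ∧ ρ.trace = 1

/-- A measurement operator: `0 ≤ Λ ≤ I`. -/
def IsMeasOp (Λ : Matrix d d ℂ) : Prop := Λ.PosSemidef ∧ (1 - Λ).PosSemidef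

/-- `n`-fold tensor power of a matrix. -/
def tpow (ρ : Matrix d d ℂ) (n : ℕ) : Matrix (Fin n → d) (Fin n → d) ℂ :=
  Matrix.of fun x y => ∏ i, ρ (x i) (y i)

/-- Partial trace over the right (second) tensor factor. -/
noncomputable def ptraceR {a b : Type*} [Fintype a] [Fintype b]
    (ρ : Matrix (a × b) (a × b) ℂ) : Matrix a a ℂ :=
  Matrix.of fun i j => ∑ k, ρ (i, k) (j, k)

/-- Partial trace over the left (first) tensor factor. -/
noncomputable def ptraceL {a b : Type*} [Fintype a] [Fintype b]
    (ρ : Matrix (a × b) (a × b) ℂ) : Matrix b b ℂ :=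
  Matrix.of fun i j => ∑ k, ρ (k, i) (k, j)

/-- Quantum relative entropy (base 2), via the `mlog` convention. -/
noncomputable def qRelEnt (ρ σ : Matrix d d ℂ) : ℝ :=
  ((ρ * (mlog ρ - mlog σ)).trace).re

/-- ε-hypothesis testing relative entropy. -/
noncomputable def DH (ε : ℝ) (ρ σ : Matrix d d ℂ) : ℝ :=
  -Real.logb 2 (sInf {x : ℝ | ∃ Λ : Matrix d d ℂ,
    IsMeasOp Λ ∧ 1 - ε ≤ ((Λ * ρ).trace).re ∧ x = ((Λ * σ).trace).re})

/-- Petz–Rényi relative entropy of order α. -/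
noncomputable def DAlpha (α : ℝ) (ρ σ : Matrix d d ℂ) : ℝ :=
  (1 / (α - 1)) * Real.logb 2 (((mpow ρ α * mpow σ (1 - α)).trace).re)

/-- Shannon entropy (bits) of a probability vector. -/
noncomputable def shannon (p : d → ℝ) : ℝ := -∑ x, p x * Real.logb 2 (p x)

/-- von Neumann entropy (bits). -/
noncomputable def vnEntropy (A : Matrix d d ℂ) : ℝ :=
  if hA : A.IsHermitian then -∑ i, hA.eigenvalues i * Real.logb 2 (hA.eigenvalues i) else 0

/-- Collision (order-2) conditional entropy `H₂(C|S)` of a bipartite state on `s ⊗ c`. -/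
noncomputable def H2cond {s c : Type*} [Fintype s] [Fintype c] [DecidableEq s] [DecidableEq c]
    (ω : Matrix (s × c) (s × c) ℂ) : ℝ :=
  -Real.logb 2 ((ω * (mpow (ptraceR ω) (-(1/2)) ⊗ₖ (1 : Matrix c c ℂ)) *
      ω * (mpow (ptraceR ω) (-(1/2)) ⊗ₖ (1 : Matrix c c ℂ))).trace).re

section HNhelp
set_option linter.unusedSectionVars false

namespace HNhelp
variable {A : Matrix d d ℂ} (hA : A.IsHermitian)

lemma specFun_conjTranspose (f : ℝ → ℝ) : (specFun hA f)ᴴ = specFun hA f := by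
  unfold specFun
  simp only [star_eq_conjTranspose, conjTranspose_mul, conjTranspose_conjTranspose,
    diagonal_conjTranspose, mul_assoc]
  have h : (star fun i => ((f (hA.eigenvalues i) : ℝ) : ℂ)) =
      (fun i => ((f (hA.eigenvalues i) : ℝ) : ℂ)) := by
    funext i
    simp [Complex.conj_ofReal]
  rw [h]

lemma specFun_mul (f g : ℝ → ℝ) :
    specFun hA f * specFun hA g = specFun hA (fun t => f t * g t) := by
  unfold specFun
  set U : Matrix d d ℂ := (hA.eigenvectorUnitary : Matrix d d ℂ) with hU
  set Df : Matrix d d ℂ := Matrix.diagonal (fun i => (f (hA.eigenvalues i) : ℂ)) with hDf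
  set Dg : Matrix d d ℂ := Matrix.diagonal (fun i => (g (hA.eigenvalues i) : ℂ)) with hDg
  have h1 : (star U) * U = 1 := (Matrix.mem_unitaryGroup_iff').mp hA.eigenvectorUnitary.2
  have key : (U * Df * star U) * (U * Dg * star U) = U * Df * ((star U) * U) * Dg * star U := by
    simp only [mul_assoc]
  rw [key, h1, mul_one, mul_assoc U Df Dg, hDf, hDg, diagonal_mul_diagonal]
  congr 2
  funext i
  push_cast
  ring

lemma specFun_sub (f g : ℝ → ℝ) :
    specFun hA f - specFun hA g = specFun hA (fun t => f t - g t) := by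
  unfold specFun
  rw [← sub_mul, ← mul_sub, diagonal_sub]
  congr 2
  funext i
  push_cast
  ring

lemma specFun_one : specFun hA (fun _ => 1) = 1 := by
  unfold specFun
  have h2 : (hA.eigenvectorUnitary : Matrix d d ℂ) *
      (star (hA.eigenvectorUnitary : Matrix d d ℂ)) = 1 :=
    (Matrix.mem_unitaryGroup_iff).mp hA.eigenvectorUnitary.2
  simp only [Complex.ofReal_one, diagonal_one, mul_one, h2]

lemma specFun_id : specFun hA (fun t => t) = A := hA.spectral_theorem.symm

lemma specFun_congr {f g : ℝ → ℝ} (h : ∀ i, f (hA.eigenvalues i) = g (hA.eigenvalues i)) :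
    specFun hA f = specFun hA g := by
  unfold specFun
  have : (fun i => (f (hA.eigenvalues i) : ℂ)) = fun i => (g (hA.eigenvalues i) : ℂ) :=
    funext fun i => by rw [h i]
  rw [this]

lemma specFun_posSemidef {f : ℝ → ℝ} (h : ∀ i, 0 ≤ f (hA.eigenvalues i)) :
    (specFun hA f).PosSemidef := by
  unfold specFun
  rw [show (star (hA.eigenvectorUnitary : Matrix d d ℂ)) =
      (hA.eigenvectorUnitary : Matrix d d ℂ)ᴴ from rfl]
  exact (Matrix.posSemidef_diagonal_iff.mpr fun i =>
    Complex.zero_le_real.mpr (h i)).mul_mul_conjTranspose_same _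

lemma posSemidef_real_smul {A : Matrix d d ℂ} (hA : A.PosSemidef) {r : ℝ} (hr : 0 ≤ r) :
    ((r : ℂ) • A).PosSemidef := by
  refine posSemidef_iff_dotProduct_mulVec.mpr ⟨?_, ?_⟩
  · have : ((r : ℂ) • A)ᴴ = star (r : ℂ) • Aᴴ := conjTranspose_smul _ _
    rw [Matrix.IsHermitian, this, hA.1, Complex.star_def, Complex.conj_ofReal]
  · intro x
    rw [smul_mulVec, dotProduct_smul, smul_eq_mul]
    exact mul_nonneg (Complex.zero_le_real.mpr hr) (hA.dotProduct_mulVec_nonneg x)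

lemma sub_posSemidef_of_sq {P Q : Matrix d d ℂ} (hP : P.PosSemidef) (hQ : Q.PosSemidef)
    (h : (Q * Q - P * P).PosSemidef) : (Q - P).PosSemidef := by
  have hC : (Q - P).IsHermitian := hQ.1.sub hP.1
  refine hC.posSemidef_iff_eigenvalues_nonneg.mpr fun i => ?_
  show 0 ≤ hC.eigenvalues i
  by_contra hneg
  push_neg at hneg
  set t : ℝ := hC.eigenvalues i with ht
  set v : d → ℂ := ⇑(hC.eigenvectorBasis i) with hv
  have hv0 : v ≠ 0 := by
    intro h0
    apply hC.eigenvectorBasis.orthonormal.ne_zero i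
    ext j
    simpa [hv] using congrFun h0 j
  have hv' : (Q - P) *ᵥ v = (t : ℝ) • v := hC.mulVec_eigenvectorBasis i
  have h_sum : star v ⬝ᵥ (Q * Q - P * P) *ᵥ v
      = (t : ℂ) * (star v ⬝ᵥ Q *ᵥ v + star v ⬝ᵥ P *ᵥ v) := calc
    star v ⬝ᵥ (Q * Q - P * P) *ᵥ v
        = star v ⬝ᵥ Q *ᵥ (Q - P) *ᵥ v + star v ⬝ᵥ (Q - P) *ᵥ P *ᵥ v := by
      rw [mulVec_mulVec, mulVec_mulVec, ← dotProduct_add, ← add_mulVec, mul_sub, sub_mul,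
        add_sub, sub_add_cancel]
    _ = (t : ℂ) * (star v ⬝ᵥ Q *ᵥ v) + (star v) ᵥ* (Q - P)ᴴ ⬝ᵥ P *ᵥ v := by
      rw [hv', mulVec_smul, dotProduct_smul, RCLike.real_smul_eq_coe_mul,
        dotProduct_mulVec _ (Q - P), hC]
      rfl
    _ = (t : ℂ) * (star v ⬝ᵥ Q *ᵥ v + star v ⬝ᵥ P *ᵥ v) := by
      have hcast : ((t:ℂ)) = RCLike.ofReal t := rfl
      rw [hcast]
      simp_rw [← star_mulVec, hv', mul_add, ← RCLike.real_smul_eq_coe_mul, ← smul_dotProduct]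
      congr 2 with j
      simp only [Pi.star_apply, Pi.smul_apply, RCLike.real_smul_eq_coe_mul, star_mul',
        RCLike.star_def, RCLike.conj_ofReal]
  have hq : (0:ℂ) ≤ star v ⬝ᵥ Q *ᵥ v := hQ.dotProduct_mulVec_nonneg v
  have hp : (0:ℂ) ≤ star v ⬝ᵥ P *ᵥ v := hP.dotProduct_mulVec_nonneg v
  have hge : (0:ℂ) ≤ (t : ℂ) * (star v ⬝ᵥ Q *ᵥ v + star v ⬝ᵥ P *ᵥ v) := h_sum ▸ h.dotProduct_mulVec_nonneg v
  have hle : (t : ℂ) * (star v ⬝ᵥ Q *ᵥ v + star v ⬝ᵥ P *ᵥ v) ≤ 0 := by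
    have hsum : (0:ℂ) ≤ star v ⬝ᵥ Q *ᵥ v + star v ⬝ᵥ P *ᵥ v := add_nonneg hq hp
    have : ((t:ℂ)) ≤ 0 := by
      rw [show ((0:ℂ)) = ((0:ℝ):ℂ) from rfl]
      exact_mod_cast hneg.le
    exact mul_nonpos_of_nonpos_of_nonneg this hsum
  have hzero : (t : ℂ) * (star v ⬝ᵥ Q *ᵥ v + star v ⬝ᵥ P *ᵥ v) = 0 := le_antisymm hle hge
  have ht0 : (t : ℂ) ≠ 0 := by
    exact_mod_cast ne_of_lt hneg
  have hsum0 : star v ⬝ᵥ Q *ᵥ v + star v ⬝ᵥ P *ᵥ v = 0 :=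
    (mul_eq_zero.mp hzero).resolve_left ht0
  have hq0 : star v ⬝ᵥ Q *ᵥ v = 0 :=
    ((add_eq_zero_iff_of_nonneg hq hp).mp hsum0).1
  have hp0 : star v ⬝ᵥ P *ᵥ v = 0 :=
    ((add_eq_zero_iff_of_nonneg hq hp).mp hsum0).2
  have hQv : Q *ᵥ v = 0 := (hQ.dotProduct_mulVec_zero_iff v).mp hq0
  have hPv : P *ᵥ v = 0 := (hP.dotProduct_mulVec_zero_iff v).mp hp0
  have hz : (t : ℝ) • v = 0 := by
    rw [← hv', sub_mulVec, hQv, hPv, sub_zero]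
  rcases smul_eq_zero.mp hz with h1 | h2
  · exact absurd h1 (by exact_mod_cast ne_of_lt hneg)
  · exact hv0 h2

lemma eigenvalues_le_one {S : Matrix d d ℂ} (hS : S.PosSemidef)
    (hSI : (1 - S).PosSemidef) (i : d) : hS.1.eigenvalues i ≤ 1 := by
  set v : d → ℂ := ⇑(hS.1.eigenvectorBasis i) with hv
  have h1 : star v ⬝ᵥ v = 1 := by
    have he : (inner ℂ (hS.1.eigenvectorBasis i) (hS.1.eigenvectorBasis i) : ℂ)
        = star v ⬝ᵥ v := by
      rw [EuclideanSpace.inner_eq_star_dotProduct, dotProduct_comm]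
    rw [← he, inner_self_eq_norm_sq_to_K, hS.1.eigenvectorBasis.orthonormal.1 i]
    norm_num
  have h2 := hSI.re_dotProduct_nonneg v
  rw [sub_mulVec, one_mulVec, dotProduct_sub, map_sub, h1] at h2
  have h3 : hS.1.eigenvalues i = RCLike.re (star v ⬝ᵥ S *ᵥ v) := hS.1.eigenvalues_eq i
  rw [← h3] at h2
  simpa using h2

lemma key_identity (S T X : Matrix d d ℂ) (c : ℝ)
    (h2 : (S + T) * X = X * (S + T)) :
    ((1 + c : ℝ) : ℂ) • (1 - S) + ((2 + c + c⁻¹ : ℝ) : ℂ) • T - (1 - X * S * X)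
      = (c : ℂ) • (1 - X * ((S + T) * X))
        + ((2 * (1 + c) : ℝ) : ℂ) • (X * (S + T) - S)
        + ((1 + c : ℝ) : ℂ) • ((X - 1) * S * (X - 1))
        + ((c : ℂ) • ((X - 1) * T * (X - 1)) + ((c⁻¹ : ℝ) : ℂ) • T
            - ((X - 1) * T + T * (X - 1))) := by
  have hz : (S + T) * X - X * (S + T) = 0 := by rw [h2, sub_self]
  have main : ((1 + c : ℝ) : ℂ) • (1 - S) + ((2 + c + c⁻¹ : ℝ) : ℂ) • T - (1 - X * S * X)
      = ((c : ℂ) • (1 - X * ((S + T) * X))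
        + ((2 * (1 + c) : ℝ) : ℂ) • (X * (S + T) - S)
        + ((1 + c : ℝ) : ℂ) • ((X - 1) * S * (X - 1))
        + ((c : ℂ) • ((X - 1) * T * (X - 1)) + ((c⁻¹ : ℝ) : ℂ) • T
            - ((X - 1) * T + T * (X - 1))))
        + ((1 + c : ℝ) : ℂ) • ((S + T) * X - X * (S + T)) := by
    push_cast
    simp only [smul_sub, smul_add, sub_mul, mul_sub, add_mul, mul_add, mul_one, one_mul,
      mul_assoc]
    module
  rw [main, hz, smul_zero, add_zero]

lemma BTB (T X : Matrix d d ℂ) (c : ℝ) (hc : 0 < c) :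
    ((Real.sqrt c : ℂ) • (X - 1) - (((Real.sqrt c)⁻¹ : ℝ) : ℂ) • 1) * T *
      ((Real.sqrt c : ℂ) • (X - 1) - (((Real.sqrt c)⁻¹ : ℝ) : ℂ) • 1)
    = (c : ℂ) • ((X - 1) * T * (X - 1)) + ((c⁻¹ : ℝ) : ℂ) • T
        - ((X - 1) * T + T * (X - 1)) := by
  have e1 : ((Real.sqrt c : ℝ) : ℂ) * ((Real.sqrt c : ℝ) : ℂ) = (c : ℂ) := by
    rw [← Complex.ofReal_mul, Real.mul_self_sqrt hc.le]
  have e2 : ((Real.sqrt c : ℝ) : ℂ) * (((Real.sqrt c)⁻¹ : ℝ) : ℂ) = 1 := by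
    rw [← Complex.ofReal_mul, mul_inv_cancel₀ (Real.sqrt_ne_zero'.mpr hc), Complex.ofReal_one]
  have e3 : (((Real.sqrt c)⁻¹ : ℝ) : ℂ) * ((Real.sqrt c : ℝ) : ℂ) = 1 := by
    rw [← Complex.ofReal_mul, inv_mul_cancel₀ (Real.sqrt_ne_zero'.mpr hc), Complex.ofReal_one]
  have e4 : (((Real.sqrt c)⁻¹ : ℝ) : ℂ) * (((Real.sqrt c)⁻¹ : ℝ) : ℂ) = ((c⁻¹ : ℝ) : ℂ) := by
    rw [← Complex.ofReal_mul, ← mul_inv, Real.mul_self_sqrt hc.le]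
  simp only [sub_mul, mul_sub, smul_mul_assoc, mul_smul_comm, smul_sub, smul_add, smul_smul,
    one_mul, mul_one]
  rw [e1, e2, e3, e4]
  module

end HNhelp
end HNhelp


open HNhelp in
/-- **Hayashi–Nagaoka operator inequality.** For `0 ≤ S ≤ I`, `T ≥ 0` and `c > 0`,
`I - (S+T)^{-1/2} S (S+T)^{-1/2} ≤ (1+c)(I-S) + (2+c+c⁻¹)T`, where `(S+T)^{-1/2}` is the
square root of the Moore–Penrose inverse of `S + T`. -/
theorem hayashi_nagaoka (S T : Matrix d d ℂ)
    (hS : S.PosSemidef) (hSI : (1 - S).PosSemidef) (hT : T.PosSemidef)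
    (c : ℝ) (hc : 0 < c) :
    (((1 + c : ℝ) : ℂ) • (1 - S) + ((2 + c + c⁻¹ : ℝ) : ℂ) • T -
      (1 - mpow (S + T) (-(1/2)) * S * mpow (S + T) (-(1/2)))).PosSemidef := by
  have hM : (S + T).PosSemidef := hS.add hT
  have hMh : (S + T).IsHermitian := hM.1
  have hev : ∀ i, 0 ≤ hMh.eigenvalues i := hM.eigenvalues_nonneg
  set f : ℝ → ℝ := fun t => if t = 0 then 0 else t ^ ((-(1/2)) : ℝ) with hf
  have hmp : mpow (S + T) (-(1/2)) = specFun hMh f := by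
    rw [mpow, dif_pos hM]
  set X : Matrix d d ℂ := specFun hMh f with hX
  -- pointwise scalar facts
  have hfval : ∀ m : ℝ, 0 < m → f m = (Real.sqrt m)⁻¹ := by
    intro m hm
    rw [hf]
    simp only [if_neg (ne_of_gt hm)]
    rw [show ((-(1/2)) : ℝ) = -(1/2) from rfl, Real.rpow_neg hm.le,
      ← Real.sqrt_eq_rpow]
  -- X * M = M * X = sqrt M
  have hXM : X * (S + T) = specFun hMh Real.sqrt := by
    have base : specFun hMh f * specFun hMh (fun t => t) = specFun hMh Real.sqrt := by
      rw [specFun_mul]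
      apply specFun_congr
      intro i
      rcases (hev i).eq_or_lt with h0 | hpos
      · simp [hf, ← h0]
      · rw [hfval _ hpos]
        rw [inv_mul_eq_iff_eq_mul₀ (Real.sqrt_ne_zero'.mpr hpos)]
        exact (Real.mul_self_sqrt (hev i)).symm
    rw [specFun_id hMh] at base
    rw [hX]
    exact base
  have hMX : (S + T) * X = specFun hMh Real.sqrt := by
    have base : specFun hMh (fun t => t) * specFun hMh f = specFun hMh Real.sqrt := by
      rw [specFun_mul]
      apply specFun_congr
      intro i
      rcases (hev i).eq_or_lt with h0 | hpos
      · simp [hf, ← h0]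
      · rw [hfval _ hpos]
        rw [mul_inv_eq_iff_eq_mul₀ (Real.sqrt_ne_zero'.mpr hpos)]
        exact (Real.mul_self_sqrt (hev i)).symm
    rw [specFun_id hMh] at base
    rw [hX]
    exact base
  have hcomm : (S + T) * X = X * (S + T) := hMX.trans hXM.symm
  -- Pi
  have hPi : X * ((S + T) * X) = specFun hMh (fun t => if t = 0 then 0 else 1) := by
    rw [hMX, hX, specFun_mul]
    apply specFun_congr
    intro i
    rcases (hev i).eq_or_lt with h0 | hpos
    · simp [hf, ← h0]
    · rw [hfval _ hpos, if_neg (ne_of_gt hpos),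
        inv_mul_cancel₀ (Real.sqrt_ne_zero'.mpr hpos)]
  -- W * W = M
  have hWW : specFun hMh Real.sqrt * specFun hMh Real.sqrt = S + T := by
    have base : specFun hMh Real.sqrt * specFun hMh Real.sqrt = specFun hMh (fun t => t) := by
      rw [specFun_mul]
      apply specFun_congr
      intro i
      exact Real.mul_self_sqrt (hev i)
    rw [specFun_id hMh] at base
    exact base
  -- PSD pieces
  have p1 : (1 - X * ((S + T) * X)).PosSemidef := by
    rw [hPi, ← specFun_one hMh, specFun_sub]
    apply specFun_posSemidef
    intro i
    rcases (hev i).eq_or_lt with h0 | hpos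
    · simp [← h0]
    · simp [if_neg (ne_of_gt hpos)]
  have hS1 : ∀ i, hS.1.eigenvalues i ≤ 1 := eigenvalues_le_one hS hSI
  have hS0 : ∀ i, 0 ≤ hS.1.eigenvalues i := hS.eigenvalues_nonneg
  have hSS : (S - S * S).PosSemidef := by
    have e : specFun hS.1 (fun t => t) - specFun hS.1 (fun t => t) * specFun hS.1 (fun t => t)
        = specFun hS.1 (fun t => t - t * t) := by
      rw [specFun_mul, specFun_sub]
    rw [specFun_id hS.1] at e
    rw [e]
    apply specFun_posSemidef
    intro i
    nlinarith [hS0 i, hS1 i]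
  have p2 : (X * (S + T) - S).PosSemidef := by
    rw [hXM]
    apply sub_posSemidef_of_sq hS (specFun_posSemidef hMh fun i => Real.sqrt_nonneg _)
    rw [hWW]
    have e : S + T - S * S = T + (S - S * S) := by abel
    rw [e]
    exact hT.add hSS
  have hXh : Xᴴ = X := specFun_conjTranspose hMh f
  have hZh : (X - 1)ᴴ = X - 1 := by
    rw [conjTranspose_sub, hXh, conjTranspose_one]
  have p3 : ((X - 1) * S * (X - 1)).PosSemidef := by
    have := hS.mul_mul_conjTranspose_same (X - 1)
    rwa [hZh] at this
  have p4 : ((c : ℂ) • ((X - 1) * T * (X - 1)) + ((c⁻¹ : ℝ) : ℂ) • T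
      - ((X - 1) * T + T * (X - 1))).PosSemidef := by
    rw [← BTB T X c hc]
    set B : Matrix d d ℂ :=
      (Real.sqrt c : ℂ) • (X - 1) - (((Real.sqrt c)⁻¹ : ℝ) : ℂ) • 1 with hB
    have hBh : Bᴴ = B := by
      rw [hB, conjTranspose_sub, conjTranspose_smul, conjTranspose_smul, hZh,
        conjTranspose_one]
      simp only [Complex.star_def, Complex.conj_ofReal]
    have := hT.mul_mul_conjTranspose_same B
    rwa [hBh] at this
  rw [hmp, key_identity S T X c hcomm]
  exact ((((posSemidef_real_smul p1 hc.le).add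
    (posSemidef_real_smul p2 (by positivity))).add
    (posSemidef_real_smul p3 (by positivity))).add p4)
end

section
/- Let ω_{SC} be a density operator on a bipartite finite-dimensional system with ω_S of full rank, and let Π_{S^n} be any orthogonal projector on S^n satisfying Π_{S^n} ≤ 2^{−n[H(S)_ω−δ]/2}(ω_S^{⊗n})^{−1/2}. Then Tr{Π_{S^n} ω_{SC}^{⊗n} Π_{S^n} ω_{SC}^{⊗n}} ≤ 2^{−n[H(S)_ω−δ]} Tr{ω_{SC}^{⊗n}(ω_S^{⊗n})^{−1/2} ω_{SC}^{⊗n}(ω_S^{⊗n})^{−1/2}} = 2^{−n[H(S)_ω−δ]} 2^{−n H₂(C|S)_ω}, where H₂(C|S)_ω = −log₂ Tr{ω_{SC} ω_S^{−1/2} ω_{SC} ω_S^{−1/2}} is the collision conditional entropy. -/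
open Matrix BigOperators Kronecker
open scoped Classical ComplexOrder

variable {d : Type*} [Fintype d] [DecidableEq d]

/-- `n`-fold tensor power of a bipartite matrix, with indices regrouped as
`S^n × C^n`. -/
noncomputable def tpowBip {s c : Type*} [Fintype s] [Fintype c] [DecidableEq s] [DecidableEq c]
    (ω : Matrix (s × c) (s × c) ℂ) (n : ℕ) :
    Matrix ((Fin n → s) × (Fin n → c)) ((Fin n → s) × (Fin n → c)) ℂ :=
  Matrix.reindex (Equiv.arrowProdEquivProdArrow (Fin n) (fun _ => s) (fun _ => c))
    (Equiv.arrowProdEquivProdArrow (Fin n) (fun _ => s) (fun _ => c)) (tpow ω n)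

set_option linter.unusedSectionVars false

section Shim
open scoped MatrixOrder

noncomputable def Matrix.PosSemidef.sqrt {n : Type*} [Fintype n] [DecidableEq n]
    {M : Matrix n n ℂ} (_h : M.PosSemidef) : Matrix n n ℂ := CFC.sqrt M

lemma Matrix.PosSemidef.sqrt_mul_self {n : Type*} [Fintype n] [DecidableEq n]
    {M : Matrix n n ℂ} (h : M.PosSemidef) : h.sqrt * h.sqrt = M :=
  CFC.sqrt_mul_sqrt_self M (Matrix.nonneg_iff_posSemidef.mpr h)

lemma Matrix.PosSemidef.posSemidef_sqrt {n : Type*} [Fintype n] [DecidableEq n]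
    {M : Matrix n n ℂ} (h : M.PosSemidef) : h.sqrt.PosSemidef :=
  Matrix.nonneg_iff_posSemidef.mp (CFC.sqrt_nonneg M)

lemma Matrix.PosSemidef.eq_of_sq_eq_sq {n : Type*} [Fintype n] [DecidableEq n]
    {A B : Matrix n n ℂ} (hA : A.PosSemidef) (hB : B.PosSemidef) (h : A ^ 2 = B ^ 2) : A = B := by
  rw [← CFC.sqrt_sq A (Matrix.nonneg_iff_posSemidef.mpr hA), h,
    CFC.sqrt_sq B (Matrix.nonneg_iff_posSemidef.mpr hB)]

lemma Matrix.posSemidef_iff_eq_transpose_mul_self {n : Type*} [Fintype n] [DecidableEq n]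
    {A : Matrix n n ℂ} : A.PosSemidef ↔ ∃ B : Matrix n n ℂ, A = Bᴴ * B :=
  ⟨fun h => ⟨h.sqrt, by rw [h.posSemidef_sqrt.1.eq, h.sqrt_mul_self]⟩,
    fun ⟨B, hB⟩ => hB ▸ Matrix.posSemidef_conjTranspose_mul_self B⟩

end Shim

section AuxLemmas

lemma aux_tpow_mul (M N : Matrix d d ℂ) (n : ℕ) :
    tpow (M * N) n = tpow M n * tpow N n := by
  ext x y
  simp only [tpow, Matrix.of_apply, Matrix.mul_apply]
  rw [Fintype.prod_sum]
  exact Finset.sum_congr rfl fun g _ => Finset.prod_mul_distrib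

lemma aux_tpow_conjT (M : Matrix d d ℂ) (n : ℕ) : tpow Mᴴ n = (tpow M n)ᴴ := by
  ext x y
  simp [tpow, Matrix.conjTranspose_apply, star_prod]

lemma aux_tpow_one (n : ℕ) : tpow (1 : Matrix d d ℂ) n = 1 := by
  ext x y
  by_cases h : x = y
  · subst h; simp [tpow, Matrix.one_apply]
  · obtain ⟨i, hi⟩ : ∃ i, x i ≠ y i := by
      by_contra hc; push_neg at hc; exact h (funext hc)
    simp only [tpow, Matrix.of_apply, Matrix.one_apply, if_neg h]
    exact Finset.prod_eq_zero (Finset.mem_univ i) (by simp [hi])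

lemma aux_tpow_trace (M : Matrix d d ℂ) (n : ℕ) : (tpow M n).trace = M.trace ^ n := by
  simp only [Matrix.trace, Matrix.diag, tpow, Matrix.of_apply]
  rw [show (∑ k, M k k) ^ n = ∏ _i : Fin n, ∑ k, M k k by simp, Fintype.prod_sum]

lemma aux_tpow_psd {M : Matrix d d ℂ} (hM : M.PosSemidef) (n : ℕ) :
    (tpow M n).PosSemidef := by
  obtain ⟨B, rfl⟩ := Matrix.posSemidef_iff_eq_transpose_mul_self.mp hM
  rw [aux_tpow_mul, aux_tpow_conjT]
  exact Matrix.posSemidef_conjTranspose_mul_self _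

lemma aux_kron_conjT {a b : Type*} [Fintype a] [Fintype b]
    (A : Matrix a a ℂ) (B : Matrix b b ℂ) : (A ⊗ₖ B)ᴴ = Aᴴ ⊗ₖ Bᴴ := by
  ext ⟨i, j⟩ ⟨k, l⟩
  simp [Matrix.conjTranspose_apply, Matrix.kroneckerMap_apply, star_mul']

lemma aux_sub_kron {a b : Type*} [Fintype a] [Fintype b]
    (A B : Matrix a a ℂ) (C : Matrix b b ℂ) : (A - B) ⊗ₖ C = A ⊗ₖ C - B ⊗ₖ C := by
  ext ⟨i, j⟩ ⟨k, l⟩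
  simp [Matrix.kroneckerMap_apply, sub_mul]

lemma aux_kron_one_psd {a b : Type*} [Fintype a] [Fintype b] [DecidableEq a] [DecidableEq b]
    {A : Matrix a a ℂ} (hA : A.PosSemidef) : (A ⊗ₖ (1 : Matrix b b ℂ)).PosSemidef := by
  obtain ⟨B, rfl⟩ := Matrix.posSemidef_iff_eq_transpose_mul_self.mp hA
  have h : (Bᴴ ⊗ₖ (1 : Matrix b b ℂ)) * (B ⊗ₖ 1) = (Bᴴ * B) ⊗ₖ (1 : Matrix b b ℂ) := by
    rw [← Matrix.mul_kronecker_mul, one_mul]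
  rw [← h, show (Bᴴ ⊗ₖ (1 : Matrix b b ℂ)) = (B ⊗ₖ (1 : Matrix b b ℂ))ᴴ by
    rw [aux_kron_conjT, Matrix.conjTranspose_one]]
  exact Matrix.posSemidef_conjTranspose_mul_self _

lemma aux_psd_trace_re_nonneg {A : Matrix d d ℂ} (hA : A.PosSemidef) : 0 ≤ A.trace.re := by
  have h : ∀ i, 0 ≤ A i i := fun i => by
    have := hA.dotProduct_mulVec_nonneg (Pi.single i 1)
    simpa [dotProduct, Matrix.mulVec, Pi.single_apply] using this
  have : (0:ℝ) ≤ ∑ i, (A i i).re :=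
    Finset.sum_nonneg fun i _ => by
      have := h i; rw [Complex.le_def] at this; simpa using this.1
  simpa [Matrix.trace, Matrix.diag, Complex.re_sum] using this

lemma aux_trace_mul_psd_nonneg {A B : Matrix d d ℂ} (hA : A.PosSemidef) (hB : B.PosSemidef) :
    0 ≤ ((A * B).trace).re := by
  obtain ⟨C, rfl⟩ := Matrix.posSemidef_iff_eq_transpose_mul_self.mp hA
  rw [Matrix.mul_assoc, Matrix.trace_mul_comm]
  exact aux_psd_trace_re_nonneg (hB.mul_mul_conjTranspose_same C)

lemma aux_star_mul_self {A : Matrix d d ℂ} (hA : A.IsHermitian) :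
    star (hA.eigenvectorUnitary : Matrix d d ℂ) * (hA.eigenvectorUnitary : Matrix d d ℂ) = 1 :=
  Matrix.mem_unitaryGroup_iff'.mp hA.eigenvectorUnitary.2

lemma aux_mul_star_self {A : Matrix d d ℂ} (hA : A.IsHermitian) :
    (hA.eigenvectorUnitary : Matrix d d ℂ) * star (hA.eigenvectorUnitary : Matrix d d ℂ) = 1 :=
  Matrix.mem_unitaryGroup_iff.mp hA.eigenvectorUnitary.2

lemma aux_specFun_mul {A : Matrix d d ℂ} (hA : A.IsHermitian) (f g : ℝ → ℝ) :
    specFun hA f * specFun hA g = specFun hA (fun t => f t * g t) := by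
  unfold specFun
  simp only [Matrix.mul_assoc]
  rw [← Matrix.mul_assoc (star _) _ _, aux_star_mul_self hA, one_mul,
    ← Matrix.mul_assoc (Matrix.diagonal _), Matrix.diagonal_mul_diagonal]
  push_cast
  rfl

lemma aux_specFun_congr {A : Matrix d d ℂ} (hA : A.IsHermitian) {f g : ℝ → ℝ}
    (h : ∀ i, f (hA.eigenvalues i) = g (hA.eigenvalues i)) : specFun hA f = specFun hA g := by
  unfold specFun
  rw [show (fun i => (f (hA.eigenvalues i) : ℂ)) = fun i => (g (hA.eigenvalues i) : ℂ) from
    funext fun i => by rw [h i]]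

lemma aux_specFun_one {A : Matrix d d ℂ} (hA : A.IsHermitian) :
    specFun hA (fun _ => 1) = 1 := by
  unfold specFun
  simp [aux_mul_star_self hA]

lemma aux_specFun_id {A : Matrix d d ℂ} (hA : A.IsHermitian) :
    specFun hA (fun t => t) = A := by
  unfold specFun
  exact hA.spectral_theorem.symm

lemma aux_specFun_psd {A : Matrix d d ℂ} (hA : A.IsHermitian) (f : ℝ → ℝ)
    (hf : ∀ i, 0 ≤ f (hA.eigenvalues i)) : (specFun hA f).PosSemidef := by
  have hD : (Matrix.diagonal fun i => (f (hA.eigenvalues i) : ℂ)).PosSemidef := by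
    rw [Matrix.posSemidef_diagonal_iff]
    intro i
    exact_mod_cast hf i
  have := hD.mul_mul_conjTranspose_same (hA.eigenvectorUnitary : Matrix d d ℂ)
  rwa [← Matrix.star_eq_conjTranspose] at this

lemma aux_mpow_psd {M : Matrix d d ℂ} (hM : M.PosSemidef) (s : ℝ) :
    (mpow M s).PosSemidef := by
  rw [mpow, dif_pos hM]
  refine aux_specFun_psd _ _ fun i => ?_
  split
  · exact le_refl _
  · exact Real.rpow_nonneg (hM.eigenvalues_nonneg i) s

lemma aux_specFun_mul_base {A : Matrix d d ℂ} (hA : A.IsHermitian) (f : ℝ → ℝ) :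
    specFun hA f * A = specFun hA (fun t => f t * t) := by
  have h : specFun hA f * A = specFun hA f * specFun hA (fun t => t) := by
    rw [aux_specFun_id hA]
  rw [h, aux_specFun_mul]

lemma aux_mpow_neg_half_mul_self {M : Matrix d d ℂ} (hM : M.PosDef) :
    mpow M (-(1/2)) * mpow M (-(1/2)) * M = 1 := by
  have hM' := hM.posSemidef
  rw [mpow, dif_pos hM']
  rw [aux_specFun_mul, aux_specFun_mul_base]
  rw [aux_specFun_congr hM'.1 (g := fun _ => 1) fun i => ?_, aux_specFun_one]
  have hpos : 0 < hM'.1.eigenvalues i := hM.eigenvalues_pos i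
  have hne : hM'.1.eigenvalues i ≠ 0 := hpos.ne'
  simp only [if_neg hne]
  rw [← Real.rpow_add hpos, show (-(1/2) + -(1/2) : ℝ) = -1 by norm_num,
    Real.rpow_neg_one, inv_mul_cancel₀ hne]

lemma aux_mpow_neg_half_sq {M : Matrix d d ℂ} (hM : M.PosDef) :
    mpow M (-(1/2)) * mpow M (-(1/2)) = M⁻¹ :=
  (Matrix.inv_eq_left_inv (aux_mpow_neg_half_mul_self hM)).symm

lemma aux_posDef_of_psd_unit {M N : Matrix d d ℂ} (hM : M.PosSemidef) (hMN : M * N = 1) :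
    M.PosDef := by
  refine Matrix.posDef_iff_dotProduct_mulVec.mpr
    ⟨hM.1, fun x hx => lt_of_le_of_ne (hM.dotProduct_mulVec_nonneg x) fun h => hx ?_⟩
  have h0 : M *ᵥ x = 0 := (hM.dotProduct_mulVec_zero_iff x).mp h.symm
  have h1 : N * M = 1 := mul_eq_one_comm.mp hMN
  calc x = (N * M) *ᵥ x := by rw [h1, Matrix.one_mulVec]
  _ = N *ᵥ (M *ᵥ x) := by rw [Matrix.mulVec_mulVec]
  _ = 0 := by rw [h0, Matrix.mulVec_zero]

lemma aux_psd_smul {M : Matrix d d ℂ} (hM : M.PosSemidef) {c : ℝ} (hc : 0 ≤ c) :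
    (((c : ℂ)) • M).PosSemidef := by
  refine Matrix.posSemidef_iff_dotProduct_mulVec.mpr ⟨?_, ?_⟩
  · unfold Matrix.IsHermitian
    rw [Matrix.conjTranspose_smul, hM.1.eq]
    congr 1
    simp [Complex.ext_iff]
  · intro x
    rw [Matrix.smul_mulVec, dotProduct_smul]
    have h := hM.dotProduct_mulVec_nonneg x
    rw [Complex.le_def] at h ⊢
    constructor
    · simpa using mul_nonneg hc h.1
    · simp [h.2.symm]

lemma aux_trace_reindex {a b : Type*} [Fintype a] [Fintype b] (e : a ≃ b)
    (M : Matrix a a ℂ) : (Matrix.reindex e e M).trace = M.trace := by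
  simp only [Matrix.trace, Matrix.diag, Matrix.reindex_apply, Matrix.submatrix_apply]
  exact Equiv.sum_comp e.symm (fun j => M j j)

lemma aux_reindex_mul {a b : Type*} [Fintype a] [Fintype b] (e : a ≃ b)
    (M N : Matrix a a ℂ) :
    Matrix.reindex e e M * Matrix.reindex e e N = Matrix.reindex e e (M * N) := by
  simp only [Matrix.reindex_apply]
  exact Matrix.submatrix_mul_equiv M N _ _ _

lemma aux_herm_trace_sq {X : Matrix d d ℂ} (hX : X.IsHermitian) :
    (X * X).trace = ((∑ i, ∑ j, Complex.normSq (X j i) : ℝ) : ℂ) := by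
  nth_rewrite 1 [← hX.eq]
  rw [Matrix.trace]
  push_cast
  congr 1
  ext i
  rw [Matrix.diag_apply, Matrix.mul_apply]
  congr 1
  ext j
  rw [Matrix.conjTranspose_apply, Complex.normSq_eq_conj_mul_self]
  rfl

lemma aux_herm_trace_sq_pos {X : Matrix d d ℂ} (hX : X.IsHermitian) (hX0 : X ≠ 0) :
    0 < ((X * X).trace).re := by
  rw [aux_herm_trace_sq hX, Complex.ofReal_re]
  have : ∃ i j, X j i ≠ 0 := by
    by_contra hc
    push_neg at hc
    exact hX0 (by ext j i; exact hc i j)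
  obtain ⟨i, j, hij⟩ := this
  have h1 : 0 < Complex.normSq (X j i) := Complex.normSq_pos.mpr hij
  calc (0:ℝ) < Complex.normSq (X j i) := h1
  _ ≤ ∑ j', Complex.normSq (X j' i) :=
      Finset.single_le_sum (f := fun j' => Complex.normSq (X j' i)) (fun k _ => Complex.normSq_nonneg _) (Finset.mem_univ j)
  _ ≤ ∑ i', ∑ j', Complex.normSq (X j' i') :=
      Finset.single_le_sum (f := fun i' => ∑ j', Complex.normSq (X j' i'))
        (fun k _ => Finset.sum_nonneg fun l _ => Complex.normSq_nonneg _)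
        (Finset.mem_univ i)

lemma aux_reindex_tpow_kron {s c : Type*} [Fintype s] [Fintype c] [DecidableEq s]
    [DecidableEq c] (A : Matrix s s ℂ) (B : Matrix c c ℂ) (n : ℕ) :
    Matrix.reindex (Equiv.arrowProdEquivProdArrow (Fin n) (fun _ => s) (fun _ => c))
      (Equiv.arrowProdEquivProdArrow (Fin n) (fun _ => s) (fun _ => c)) (tpow (A ⊗ₖ B) n)
    = tpow A n ⊗ₖ tpow B n := by
  ext ⟨x, y⟩ ⟨x', y'⟩
  simp [Matrix.reindex_apply, Matrix.submatrix_apply, tpow, Equiv.arrowProdEquivProdArrow,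
    Matrix.kroneckerMap_apply, Finset.prod_mul_distrib]

end AuxLemmas

/-- Key trace bound in the simultaneous-decoder error analysis: if the projector `P` on `Sⁿ`
satisfies `P ≤ 2^{-n[H(S)-δ]/2}(ω_S^{⊗n})^{-1/2}`, then
`Tr{P ω^{⊗n} P ω^{⊗n}} ≤ 2^{-n[H(S)-δ]} Tr{ω^{⊗n}(ω_S^{⊗n})^{-1/2}ω^{⊗n}(ω_S^{⊗n})^{-1/2}}`,
and the latter trace equals `2^{-n H₂(C|S)}`. -/
theorem collision_trace_bound {s c : Type*} [Fintype s] [Fintype c] [DecidableEq s]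
    [DecidableEq c] (ω : Matrix (s × c) (s × c) ℂ) (hω : IsDensity ω)
    (hS : (ptraceR ω).PosDef) (n : ℕ) (δ : ℝ) (hδ : 0 < δ)
    (P : Matrix (Fin n → s) (Fin n → s) ℂ) (hP : P.IsHermitian) (hP2 : P * P = P)
    (hPle : ((((2 : ℝ) ^ (-(n : ℝ) * (vnEntropy (ptraceR ω) - δ) / 2) : ℝ) : ℂ) •
        mpow (tpow (ptraceR ω) n) (-(1/2)) - P).PosSemidef) :
    (((P ⊗ₖ (1 : Matrix (Fin n → c) (Fin n → c) ℂ)) * tpowBip ω n *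
        (P ⊗ₖ (1 : Matrix (Fin n → c) (Fin n → c) ℂ)) * tpowBip ω n).trace).re ≤
      (2 : ℝ) ^ (-(n : ℝ) * (vnEntropy (ptraceR ω) - δ)) *
        ((tpowBip ω n *
          (mpow (tpow (ptraceR ω) n) (-(1/2)) ⊗ₖ (1 : Matrix (Fin n → c) (Fin n → c) ℂ)) *
          tpowBip ω n *
          (mpow (tpow (ptraceR ω) n) (-(1/2)) ⊗ₖ
            (1 : Matrix (Fin n → c) (Fin n → c) ℂ))).trace).re ∧
    ((tpowBip ω n *
        (mpow (tpow (ptraceR ω) n) (-(1/2)) ⊗ₖ (1 : Matrix (Fin n → c) (Fin n → c) ℂ)) *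
        tpowBip ω n *
        (mpow (tpow (ptraceR ω) n) (-(1/2)) ⊗ₖ (1 : Matrix (Fin n → c) (Fin n → c) ℂ))).trace).re
      = (2 : ℝ) ^ (-(n : ℝ) * H2cond ω) := by
  classical
  have hωpsd := hω.1
  set σ : Matrix s s ℂ := ptraceR ω with hσdef
  set e := Equiv.arrowProdEquivProdArrow (Fin n) (fun _ => s) (fun _ => c) with hedef
  set A : Matrix s s ℂ := mpow σ (-(1/2)) with hAdef
  set An : Matrix (Fin n → s) (Fin n → s) ℂ := mpow (tpow σ n) (-(1/2)) with hAndef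
  set Ω : Matrix ((Fin n → s) × (Fin n → c)) ((Fin n → s) × (Fin n → c)) ℂ := tpowBip ω n
    with hΩdef
  set cR : ℝ := (2 : ℝ) ^ (-(n : ℝ) * (vnEntropy σ - δ) / 2) with hcR
  have hσpsd : σ.PosSemidef := hS.posSemidef
  have hApsd : A.PosSemidef := aux_mpow_psd hσpsd _
  have hAAσ : A * A * σ = 1 := aux_mpow_neg_half_mul_self hS
  have hσinv : σ * σ⁻¹ = 1 := Matrix.mul_nonsing_inv _ hS.det_pos.ne'.isUnit
  have hSigpsd : (tpow σ n).PosSemidef := aux_tpow_psd hσpsd n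
  have hSigunit : tpow σ n * tpow σ⁻¹ n = 1 := by
    rw [← aux_tpow_mul, hσinv, aux_tpow_one]
  have hSigpd : (tpow σ n).PosDef := aux_posDef_of_psd_unit hSigpsd hSigunit
  have hAnpsd : An.PosSemidef := aux_mpow_psd hSigpd.posSemidef _
  have hkey : An = tpow A n := by
    refine hAnpsd.eq_of_sq_eq_sq (aux_tpow_psd hApsd n) ?_
    rw [pow_two, pow_two, hAndef, aux_mpow_neg_half_sq hSigpd, ← aux_tpow_mul, hAdef,
      aux_mpow_neg_half_sq hS]
    exact Matrix.inv_eq_right_inv hSigunit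
  set K : Matrix (s × c) (s × c) ℂ := A ⊗ₖ (1 : Matrix c c ℂ) with hKdef
  have hKpsd : K.PosSemidef := aux_kron_one_psd hApsd
  have hΩr : Ω = Matrix.reindex e e (tpow ω n) := by rw [hΩdef, hedef]; rfl
  have hBn : An ⊗ₖ (1 : Matrix (Fin n → c) (Fin n → c) ℂ) = Matrix.reindex e e (tpow K n) := by
    rw [hkey, hKdef, hedef, aux_reindex_tpow_kron, aux_tpow_one]
  have htrace2 : (Ω * (An ⊗ₖ (1 : Matrix (Fin n → c) (Fin n → c) ℂ)) * Ω *
      (An ⊗ₖ (1 : Matrix (Fin n → c) (Fin n → c) ℂ))).trace = ((ω * K * ω * K).trace) ^ n := by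
    rw [hBn, hΩr, aux_reindex_mul, aux_reindex_mul, aux_reindex_mul, aux_trace_reindex,
      ← aux_tpow_mul, ← aux_tpow_mul, ← aux_tpow_mul, aux_tpow_trace]
  have hωsq : hωpsd.sqrt * hωpsd.sqrt = ω := hωpsd.sqrt_mul_self
  set W0 : Matrix (s × c) (s × c) ℂ := hωpsd.sqrt with hW0def
  have hW0h : W0ᴴ = W0 := hωpsd.posSemidef_sqrt.1
  have hX1h : (W0 * K * W0).IsHermitian := by
    unfold Matrix.IsHermitian
    rw [Matrix.conjTranspose_mul, Matrix.conjTranspose_mul, hW0h, hKpsd.1, ← Matrix.mul_assoc]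
  have ht : (ω * K * ω * K).trace = ((W0 * K * W0) * (W0 * K * W0)).trace := by
    have h1 : (W0 * K * W0) * (W0 * K * W0) = W0 * (K * (ω * (K * W0))) := by
      rw [← hωsq]; simp only [Matrix.mul_assoc]
    have h2 : K * (ω * (K * W0)) * W0 = K * (ω * (K * ω)) := by
      simp only [Matrix.mul_assoc]; rw [hωsq]
    calc (ω * K * ω * K).trace = (K * (ω * (K * ω))).trace := by
          rw [Matrix.trace_mul_comm]; simp only [Matrix.mul_assoc]
      _ = ((K * (ω * (K * W0))) * W0).trace := by rw [h2]
      _ = (W0 * (K * (ω * (K * W0)))).trace := (Matrix.trace_mul_comm _ _).symm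
      _ = ((W0 * K * W0) * (W0 * K * W0)).trace := by rw [h1]
  have hKpd : K.PosDef := by
    refine aux_posDef_of_psd_unit hKpsd (N := (A * σ) ⊗ₖ (1 : Matrix c c ℂ)) ?_
    rw [hKdef, ← Matrix.mul_kronecker_mul, ← Matrix.mul_assoc, hAAσ, one_mul,
      Matrix.one_kronecker_one]
  have hX1ne : W0 * K * W0 ≠ 0 := by
    intro h0
    have hW0v : ∀ x : (s × c) → ℂ, W0 *ᵥ x = 0 := by
      intro x
      by_contra hx
      have hpos := (Matrix.posDef_iff_dotProduct_mulVec.mp hKpd).2 hx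
      have hq : star (W0 *ᵥ x) ⬝ᵥ (K *ᵥ (W0 *ᵥ x)) = star x ⬝ᵥ ((W0 * K * W0) *ᵥ x) := by
        calc star (W0 *ᵥ x) ⬝ᵥ (K *ᵥ (W0 *ᵥ x))
            = (star x ᵥ* W0ᴴ) ⬝ᵥ (K *ᵥ (W0 *ᵥ x)) := by rw [Matrix.star_mulVec]
          _ = (star x ᵥ* W0) ⬝ᵥ (K *ᵥ (W0 *ᵥ x)) := by rw [hW0h]
          _ = star x ⬝ᵥ (W0 *ᵥ (K *ᵥ (W0 *ᵥ x))) := (Matrix.dotProduct_mulVec _ _ _).symm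
          _ = star x ⬝ᵥ ((W0 * K * W0) *ᵥ x) := by
              rw [Matrix.mulVec_mulVec, Matrix.mulVec_mulVec]
      have hzero : star (W0 *ᵥ x) ⬝ᵥ (K *ᵥ (W0 *ᵥ x)) = 0 := by
        rw [hq, h0, Matrix.zero_mulVec, dotProduct_zero]
      exact absurd hzero hpos.ne'
    have hW00 : W0 = 0 := by
      ext i j
      have h4 := congrFun (hW0v (Pi.single j 1)) i
      simpa [Matrix.mulVec_single] using h4
    have hω0 : ω = 0 := by rw [← hωsq, hW00, Matrix.zero_mul]
    have hcontr := hω.2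
    rw [hω0] at hcontr
    simp at hcontr
  have hX1trpos : 0 < ((ω * K * ω * K).trace).re := by
    rw [ht]; exact aux_herm_trace_sq_pos hX1h hX1ne
  have hX1treal : (ω * K * ω * K).trace = ((((ω * K * ω * K).trace).re : ℝ) : ℂ) := by
    rw [ht, aux_herm_trace_sq hX1h]; simp
  have hH2 : H2cond ω = -Real.logb 2 (((ω * K * ω * K).trace).re) := by
    rw [hKdef, hAdef, hσdef]; rfl
  have hpart2 : ((Ω * (An ⊗ₖ (1 : Matrix (Fin n → c) (Fin n → c) ℂ)) * Ω *
      (An ⊗ₖ (1 : Matrix (Fin n → c) (Fin n → c) ℂ))).trace).re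
      = (2 : ℝ) ^ (-(n : ℝ) * H2cond ω) := by
    have h5 : ((Ω * (An ⊗ₖ (1 : Matrix (Fin n → c) (Fin n → c) ℂ)) * Ω *
        (An ⊗ₖ (1 : Matrix (Fin n → c) (Fin n → c) ℂ))).trace).re
        = (((ω * K * ω * K).trace).re) ^ n := by
      rw [htrace2, hX1treal, ← Complex.ofReal_pow, Complex.ofReal_re, Complex.ofReal_re]
    rw [h5, hH2, show -(n : ℝ) * -Real.logb 2 (((ω * K * ω * K).trace).re)
        = Real.logb 2 (((ω * K * ω * K).trace).re) * (n : ℝ) by ring,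
      Real.rpow_mul (by norm_num : (0:ℝ) ≤ 2),
      Real.rpow_logb (by norm_num) (by norm_num) hX1trpos, Real.rpow_natCast]
  have hPpsd : P.PosSemidef := by
    have h6 : P = Pᴴ * P := by rw [hP, hP2]
    rw [h6]; exact Matrix.posSemidef_conjTranspose_mul_self P
  set Q : Matrix ((Fin n → s) × (Fin n → c)) ((Fin n → s) × (Fin n → c)) ℂ :=
    P ⊗ₖ (1 : Matrix (Fin n → c) (Fin n → c) ℂ) with hQdef
  set Bn : Matrix ((Fin n → s) × (Fin n → c)) ((Fin n → s) × (Fin n → c)) ℂ :=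
    An ⊗ₖ (1 : Matrix (Fin n → c) (Fin n → c) ℂ) with hBndef
  set R : Matrix ((Fin n → s) × (Fin n → c)) ((Fin n → s) × (Fin n → c)) ℂ :=
    ((cR : ℂ)) • Bn with hRdef
  have hQpsd : Q.PosSemidef := aux_kron_one_psd hPpsd
  have hcRpos : 0 < cR := Real.rpow_pos_of_pos (by norm_num) _
  have hRpsd : R.PosSemidef := by
    rw [hRdef, hBndef]
    exact aux_psd_smul (aux_kron_one_psd hAnpsd) hcRpos.le
  have hRQ : (R - Q).PosSemidef := by
    have h7 := aux_kron_one_psd (b := Fin n → c) hPle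
    rw [aux_sub_kron, Matrix.smul_kronecker] at h7
    rw [hRdef, hQdef, hBndef]
    exact h7
  have hΩpsd : Ω.PosSemidef := by
    rw [hΩr, Matrix.reindex_apply]
    exact (aux_tpow_psd hωpsd n).submatrix _
  set W : Matrix ((Fin n → s) × (Fin n → c)) ((Fin n → s) × (Fin n → c)) ℂ := hΩpsd.sqrt
    with hWdef
  have hWW : W * W = Ω := hΩpsd.sqrt_mul_self
  have hWh : Wᴴ = W := hΩpsd.posSemidef_sqrt.1
  set X : Matrix ((Fin n → s) × (Fin n → c)) ((Fin n → s) × (Fin n → c)) ℂ := W * Q * W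
    with hXdef
  set Y : Matrix ((Fin n → s) × (Fin n → c)) ((Fin n → s) × (Fin n → c)) ℂ := W * R * W
    with hYdef
  have hXpsd : X.PosSemidef := by
    have h := hQpsd.mul_mul_conjTranspose_same W
    rwa [hWh] at h
  have hYpsd : Y.PosSemidef := by
    have h := hRpsd.mul_mul_conjTranspose_same W
    rwa [hWh] at h
  have hYX : (Y - X).PosSemidef := by
    have h := hRQ.mul_mul_conjTranspose_same W
    rw [hWh, Matrix.mul_sub, Matrix.sub_mul, ← hXdef, ← hYdef] at h
    exact h
  have h1 : 0 ≤ ((X * (Y - X)).trace).re := aux_trace_mul_psd_nonneg hXpsd hYX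
  have h2 : 0 ≤ (((Y - X) * Y).trace).re := aux_trace_mul_psd_nonneg hYX hYpsd
  have hle : ((X * X).trace).re ≤ ((Y * Y).trace).re := by
    rw [Matrix.mul_sub, Matrix.trace_sub, Complex.sub_re] at h1
    rw [Matrix.sub_mul, Matrix.trace_sub, Complex.sub_re] at h2
    linarith
  have hTrX : ((Q * Ω * Q * Ω).trace) = ((X * X).trace) := by
    have hxx : X * X = W * (Q * (Ω * (Q * W))) := by
      rw [hXdef, ← hWW]; simp only [Matrix.mul_assoc]
    have h3 : (Q * (Ω * (Q * W))) * W = Q * (Ω * (Q * Ω)) := by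
      simp only [Matrix.mul_assoc, hWW]
    calc (Q * Ω * Q * Ω).trace = (Q * (Ω * (Q * Ω))).trace := by simp only [Matrix.mul_assoc]
      _ = ((Q * (Ω * (Q * W))) * W).trace := by rw [h3]
      _ = (W * (Q * (Ω * (Q * W)))).trace := (Matrix.trace_mul_comm _ _).symm
      _ = ((X * X).trace) := by rw [hxx]
  have hTrY : ((R * Ω * R * Ω).trace) = ((Y * Y).trace) := by
    have hyy : Y * Y = W * (R * (Ω * (R * W))) := by
      rw [hYdef, ← hWW]; simp only [Matrix.mul_assoc]
    have h3 : (R * (Ω * (R * W))) * W = R * (Ω * (R * Ω)) := by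
      simp only [Matrix.mul_assoc, hWW]
    calc (R * Ω * R * Ω).trace = (R * (Ω * (R * Ω))).trace := by simp only [Matrix.mul_assoc]
      _ = ((R * (Ω * (R * W))) * W).trace := by rw [h3]
      _ = (W * (R * (Ω * (R * W)))).trace := (Matrix.trace_mul_comm _ _).symm
      _ = ((Y * Y).trace) := by rw [hyy]
  have hRsmul : R * Ω * R * Ω = ((cR : ℂ) * (cR : ℂ)) • (Bn * Ω * Bn * Ω) := by
    rw [hRdef]; simp only [smul_mul_assoc, mul_smul_comm, smul_smul]
  have hcyc : (Bn * Ω * Bn * Ω).trace = (Ω * Bn * Ω * Bn).trace := by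
    calc (Bn * Ω * Bn * Ω).trace = (Ω * (Bn * Ω * Bn)).trace := (Matrix.trace_mul_comm _ _)
      _ = (Ω * Bn * Ω * Bn).trace := by simp only [Matrix.mul_assoc]
  have hTrR : ((R * Ω * R * Ω).trace).re = (cR * cR) * ((Ω * Bn * Ω * Bn).trace).re := by
    rw [hRsmul, Matrix.trace_smul, hcyc, smul_eq_mul, ← Complex.ofReal_mul,
      Complex.re_ofReal_mul]
  have hcsq : (2 : ℝ) ^ (-(n : ℝ) * (vnEntropy σ - δ)) = cR * cR := by
    rw [hcR, ← Real.rpow_add (by norm_num : (0:ℝ) < 2)]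
    congr 1; ring
  refine ⟨?_, hpart2⟩
  calc ((Q * Ω * Q * Ω).trace).re = ((X * X).trace).re := by rw [hTrX]
    _ ≤ ((Y * Y).trace).re := hle
    _ = ((R * Ω * R * Ω).trace).re := by rw [hTrY]
    _ = (cR * cR) * ((Ω * Bn * Ω * Bn).trace).re := hTrR
    _ = (2 : ℝ) ^ (-(n : ℝ) * (vnEntropy σ - δ)) * ((Ω * Bn * Ω * Bn).trace).re := by
        rw [hcsq]
end
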